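/- Suppose M satisfies the D-RIP with constant δ := δ_{(3ζ+1)k} and x_p solves the constrained least squares on the support T̃^t. Let x^t = P_{S_{ζk}(x_p)} x_p where S_{ζk} is a near-optimal support selection with constant C_k, and x has k-sparse representation supported on T. Then ‖x^t − x‖₂ ≤ ((1+√C_k)/√(1−δ²))·‖Q_{T̃^t}(x_p − x)‖₂ + ((1+√C_k)/(1−δ))·‖P_{T_e}M*e‖₂. -/

import Mathlib

set_option maxHeartbeats 1000000

open Matrix
open scoped Classical

noncomputable section

/-- `α` has at most `k` nonzero entries. -/
def sparse {n : ℕ} (k : ℕ) (α : EuclideanSpace ℝ (Fin n)) : Prop :=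
  (Finset.univ.filter fun i => α i ≠ 0).card ≤ k

/-- The D-RIP of order `k` with constant `δ`:
`(1-δ)‖Dα‖² ≤ ‖MDα‖² ≤ (1+δ)‖Dα‖²` for all `k`-sparse `α`. -/
def DRIP {m d n : ℕ} (M : Matrix (Fin m) (Fin d) ℝ) (D : Matrix (Fin d) (Fin n) ℝ)
    (k : ℕ) (δ : ℝ) : Prop :=
  ∀ α : EuclideanSpace ℝ (Fin n), sparse k α →
    (1 - δ) * ‖Matrix.toEuclideanLin D α‖ ^ 2 ≤
        ‖Matrix.toEuclideanLin M (Matrix.toEuclideanLin D α)‖ ^ 2 ∧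
      ‖Matrix.toEuclideanLin M (Matrix.toEuclideanLin D α)‖ ^ 2 ≤
        (1 + δ) * ‖Matrix.toEuclideanLin D α‖ ^ 2

/-- The span of the columns of `D` indexed by `T`, i.e. `range(D_T)`. -/
def colSpan {d n : ℕ} (D : Matrix (Fin d) (Fin n) ℝ) (T : Finset (Fin n)) :
    Submodule ℝ (EuclideanSpace ℝ (Fin d)) :=
  Submodule.span ℝ
    {v : EuclideanSpace ℝ (Fin d) | ∃ i ∈ T, v = (WithLp.equiv 2 (Fin d → ℝ)).symm (fun j => D j i)}

/-- The orthogonal projection onto a subspace `K`, as a map of the whole space. -/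
def projOnto {d : ℕ} (K : Submodule ℝ (EuclideanSpace ℝ (Fin d))) :
    EuclideanSpace ℝ (Fin d) →L[ℝ] EuclideanSpace ℝ (Fin d) :=
  K.subtypeL.comp K.orthogonalProjection

open scoped RealInnerProductSpace

lemma euclid_apply {d n : ℕ} (D : Matrix (Fin d) (Fin n) ℝ) (β : EuclideanSpace ℝ (Fin n))
    (j : Fin d) : Matrix.toEuclideanLin D β j = ∑ i, D j i * β i := rfl

lemma mem_colSpan_of_supported {d n : ℕ} (D : Matrix (Fin d) (Fin n) ℝ) (T : Finset (Fin n))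
    (β : EuclideanSpace ℝ (Fin n)) (hβ : ∀ i ∉ T, β i = 0) :
    Matrix.toEuclideanLin D β ∈ colSpan D T := by
  have hrepr : Matrix.toEuclideanLin D β =
      ∑ i ∈ T, β i • (WithLp.equiv 2 (Fin d → ℝ)).symm (fun j => D j i) := by
    ext j
    rw [euclid_apply]
    rw [show (∑ i ∈ T, β i • (WithLp.equiv 2 (Fin d → ℝ)).symm (fun j' => D j' i)) j
        = ∑ i ∈ T, β i * D j i from by
      simp [WithLp.ofLp_sum]]
    rw [← Finset.sum_subset (Finset.subset_univ T) (fun i _ hi => by rw [hβ i hi, mul_zero])]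
    exact Finset.sum_congr rfl fun i _ => mul_comm _ _
  rw [hrepr]
  exact Submodule.sum_mem _ fun i hi =>
    Submodule.smul_mem _ _ (Submodule.subset_span ⟨i, hi, rfl⟩)

lemma exists_of_mem_colSpan {d n : ℕ} (D : Matrix (Fin d) (Fin n) ℝ) (T : Finset (Fin n))
    {v : EuclideanSpace ℝ (Fin d)} (hv : v ∈ colSpan D T) :
    ∃ β : EuclideanSpace ℝ (Fin n), (∀ i ∉ T, β i = 0) ∧ v = Matrix.toEuclideanLin D β := by
  refine Submodule.span_induction ?_ ?_ ?_ ?_ hv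
  · rintro w ⟨i, hi, rfl⟩
    refine ⟨EuclideanSpace.single i (1:ℝ), fun i' hi' => ?_, ?_⟩
    · rw [EuclideanSpace.single_apply, if_neg]
      rintro rfl; exact hi' hi
    · ext j
      rw [euclid_apply]
      simp [EuclideanSpace.single_apply, Finset.sum_ite_eq']
  · exact ⟨0, fun i _ => rfl, by simp⟩
  · rintro w₁ w₂ - - ⟨β₁, hs₁, rfl⟩ ⟨β₂, hs₂, rfl⟩
    exact ⟨β₁ + β₂, fun i hi => by
      have := hs₁ i hi; have := hs₂ i hi
      simp_all [PiLp.add_apply], by rw [_root_.map_add]⟩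
  · rintro r w - ⟨β, hs, rfl⟩
    exact ⟨r • β, fun i hi => by simp [PiLp.smul_apply, hs i hi],
      (_root_.map_smul (Matrix.toEuclideanLin D) r β).symm⟩

lemma sparse_of_supported {n : ℕ} (β : EuclideanSpace ℝ (Fin n)) (U : Finset (Fin n)) (k' : ℕ)
    (hsupp : ∀ i ∉ U, β i = 0) (hcard : U.card ≤ k') : sparse k' β := by
  refine le_trans (Finset.card_le_card fun i hi => ?_) hcard
  by_contra h
  exact (Finset.mem_filter.mp hi).2 (hsupp i h)

lemma auxOneSubSq (δ : ℝ) (h0 : 0 ≤ δ) (h1 : δ < 1) : 0 < 1 - δ^2 := by nlinarith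

lemma quadDisc' (A B c' : ℝ) (h : ∀ t : ℝ, 0 ≤ A*(t*t) + (2*B)*t + c') : B^2 ≤ A*c' := by
  have h2 := discrim_le_zero h
  rw [discrim] at h2
  nlinarith [h2]

lemma sqrtCombine (P Q E δ s Z : ℝ) (hδ0 : 0 ≤ δ) (hδ1 : δ < 1) (hs : 0 < s)
    (hs2 : s^2 = 1-δ^2) (hP : 0 ≤ P) (hQ : 0 ≤ Q) (hE : 0 ≤ E) (hZ : 0 ≤ Z)
    (hp : P ≤ δ/s*Q + E/(1-δ)) (hpyth : Z^2 = P^2 + Q^2) :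
    Z ≤ Q/s + E/(1-δ) := by
  have h1δ : 0 < 1 - δ := by linarith
  have hF0 : 0 ≤ E/(1-δ) := div_nonneg hE h1δ.le
  have hRHS0 : 0 ≤ Q/s + E/(1-δ) := add_nonneg (by positivity) hF0
  have hp2 : P^2 ≤ (δ/s*Q + E/(1-δ))^2 := by
    have h0 : 0 ≤ δ/s*Q + E/(1-δ) := add_nonneg (by positivity) hF0
    nlinarith [hp, hP]
  have e3 : s*(δ/s) = δ := by field_simp
  have e4 : s*(Q/s) = Q := by field_simp
  have hmul : s^2*((δ/s*Q + E/(1-δ))^2 + Q^2) ≤ s^2*((Q/s + E/(1-δ))^2) := by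
    have expand1 : s^2*((δ/s*Q + E/(1-δ))^2) = (s*(δ/s)*Q + s*(E/(1-δ)))^2 := by ring
    have expand2 : s^2*((Q/s + E/(1-δ))^2) = (s*(Q/s) + s*(E/(1-δ)))^2 := by ring
    rw [mul_add, expand1, expand2, e3, e4]
    nlinarith [hs2, mul_nonneg (mul_nonneg hs.le hQ) hF0, hδ0, hδ1, sq_nonneg Q]
  have hsum : Z^2 ≤ (Q/s + E/(1-δ))^2 := by
    have hdiv := le_of_mul_le_mul_left (by
      calc s^2*(Z^2) ≤ s^2*((δ/s*Q + E/(1-δ))^2 + Q^2) := by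
            rw [hpyth]; nlinarith [hp2, sq_nonneg s]
        _ ≤ s^2*((Q/s + E/(1-δ))^2) := hmul) (by positivity : (0:ℝ) < s^2)
    exact hdiv
  calc Z = Real.sqrt (Z^2) := (Real.sqrt_sq hZ).symm
    _ ≤ Real.sqrt ((Q/s + E/(1-δ))^2) := Real.sqrt_le_sqrt hsum
    _ = Q/s + E/(1-δ) := Real.sqrt_sq hRHS0

lemma keyAlg (p q a b c E δ s : ℝ) (hδ0 : 0 ≤ δ) (hδ1 : δ < 1)
    (hs : 0 < s) (hs2 : s^2 = 1 - δ^2)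
    (hp : 0 ≤ p) (hq : 0 ≤ q) (hE : 0 ≤ E)
    (hlow : (1-δ)*p^2 ≤ a) (hup : a ≤ (1+δ)*p^2)
    (hlb : (1-δ)*q^2 ≤ b) (hub : b ≤ (1+δ)*q^2)
    (hd1 : c^2 ≤ (a-(1-δ)*p^2)*(b-(1-δ)*q^2))
    (hd2 : c^2 ≤ ((1+δ)*p^2-a)*((1+δ)*q^2-b))
    (hmain : a + c ≤ p*E) :
    p ≤ δ/s*q + E/(1-δ) := by
  have h1δ : 0 < 1 - δ := by linarith
  have hF : 0 ≤ E/(1-δ) := div_nonneg hE h1δ.le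
  have hr : 0 ≤ δ/s*q := by positivity
  rcases eq_or_lt_of_le hp with hp0 | hp0
  · linarith [hp0.symm ▸ (le_refl p)]
  have hX : 0 ≤ a-(1-δ)*p^2 := by linarith
  have hY : 0 ≤ (1+δ)*p^2-a := by linarith
  have hc2 : c^2*p^2 ≤ (a-(1-δ)*p^2)*((1+δ)*p^2-a)*q^2 := by
    rcases eq_or_lt_of_le hδ0 with hδz | hδz
    · have hX0 : a - (1-δ)*p^2 = 0 := by nlinarith
      have hc0 : c^2 ≤ 0 := by
        calc c^2 ≤ (a-(1-δ)*p^2)*(b-(1-δ)*q^2) := hd1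
        _ = 0 := by rw [hX0]; ring
      nlinarith [sq_nonneg c, sq_nonneg p, mul_nonneg (mul_nonneg hX hY) (sq_nonneg q)]
    · have t1 : ((1+δ)*p^2-a)*c^2 ≤ ((1+δ)*p^2-a)*((a-(1-δ)*p^2)*(b-(1-δ)*q^2)) :=
        mul_le_mul_of_nonneg_left hd1 hY
      have t2 : (a-(1-δ)*p^2)*c^2 ≤ (a-(1-δ)*p^2)*(((1+δ)*p^2-a)*((1+δ)*q^2-b)) :=
        mul_le_mul_of_nonneg_left hd2 hX
      have t3 : (2*δ)*(c^2*p^2) ≤ (2*δ)*((a-(1-δ)*p^2)*((1+δ)*p^2-a)*q^2) := by nlinarith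
      exact le_of_mul_le_mul_left t3 (by positivity)
  have hkey : s^2*((a-(1-δ)*p^2)*((1+δ)*p^2-a)) ≤ δ^2*a^2 := by
    have hid : δ^2*a^2 - (1-δ^2)*((a-(1-δ)*p^2)*((1+δ)*p^2-a)) = (a-(1-δ^2)*p^2)^2 := by ring
    rw [hs2]
    nlinarith [sq_nonneg (a-(1-δ^2)*p^2)]
  by_cases hape : a ≤ p*E
  · have h5 : (1-δ)*p*p ≤ E*p := by nlinarith
    have h6 : (1-δ)*p ≤ E := le_of_mul_le_mul_right h5 hp0
    have : p ≤ E/(1-δ) := (le_div_iff₀ h1δ).2 (by linarith)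
    linarith
  · push_neg at hape
    have hpE0 : 0 ≤ p*E := mul_nonneg hp hE
    have ha0 : 0 < a := lt_of_le_of_lt hpE0 hape
    have hc' : (a-p*E)^2 ≤ c^2 := by
      nlinarith [mul_nonneg (show 0 ≤ -c-(a-p*E) by linarith) (show 0 ≤ -c+(a-p*E) by linarith)]
    have t1 : p^2*(a-p*E)^2 ≤ p^2*c^2 := mul_le_mul_of_nonneg_left hc' (sq_nonneg p)
    have t3 : s^2*(p^2*(a-p*E)^2) ≤ s^2*((a-(1-δ)*p^2)*((1+δ)*p^2-a)*q^2) := by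
      apply mul_le_mul_of_nonneg_left _ (sq_nonneg s)
      nlinarith
    have t4 : s^2*((a-(1-δ)*p^2)*((1+δ)*p^2-a))*q^2 ≤ δ^2*a^2*q^2 :=
      mul_le_mul_of_nonneg_right hkey (sq_nonneg q)
    have h3 : (s*p*(a-p*E))^2 ≤ (δ*q*a)^2 := by nlinarith
    have h4 : s*p*(a-p*E) ≤ δ*q*a := by
      have hl : 0 ≤ s*p*(a-p*E) := by
        apply mul_nonneg (mul_nonneg hs.le hp); linarith
      have hr' : 0 ≤ δ*q*a := by positivity
      nlinarith
    have hfinal : p * (s*(1-δ)*a) ≤ (δ/s*q + E/(1-δ)) * (s*(1-δ)*a) := by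
      have expand : (δ/s*q + E/(1-δ)) * (s*(1-δ)*a) = δ*q*a*(1-δ) + E*s*a := by
        field_simp
      rw [expand]
      nlinarith [mul_le_mul_of_nonneg_left h4 h1δ.le,
        mul_le_mul_of_nonneg_left hlow (mul_nonneg hs.le hE)]
    exact le_of_mul_le_mul_right hfinal (by positivity)

/-- Under the D-RIP with constant `δ = δ_{(3ζ+1)k} < 1`, if `x_p` solves the
constrained least squares on `T̃^t` and `x^t = P_{S_{ζk}(x_p)} x_p` for a near-optimal support
selection `S_{ζk}` with constant `C_k`, then
`‖x^t − x‖ ≤ ((1+√C_k)/√(1−δ²))‖Q_{T̃^t}(x_p − x)‖ + ((1+√C_k)/(1−δ))‖P_{T_e}M*e‖`. -/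
theorem stmt14 {m d n ζ k : ℕ} (hζ : 1 ≤ ζ)
    (M : Matrix (Fin m) (Fin d) ℝ) (D : Matrix (Fin d) (Fin n) ℝ)
    (δ : ℝ) (hδ : δ < 1) (hrip : DRIP M D ((3 * ζ + 1) * k) δ)
    (T : Finset (Fin n)) (hT : T.card ≤ k)
    (α : EuclideanSpace ℝ (Fin n)) (hα : ∀ i ∉ T, α i = 0)
    (x : EuclideanSpace ℝ (Fin d)) (hx : x = Matrix.toEuclideanLin D α)
    (e : EuclideanSpace ℝ (Fin m)) (y : EuclideanSpace ℝ (Fin m))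
    (hy : y = Matrix.toEuclideanLin M x + e)
    (Ttil : Finset (Fin n)) (hTtil : Ttil.card ≤ 3 * ζ * k)
    (xp : EuclideanSpace ℝ (Fin d))
    -- `x_p` is a minimizer of the constrained least-squares problem on `T̃^t`
    (hxp : ∃ αp : EuclideanSpace ℝ (Fin n), (∀ i ∉ Ttil, αp i = 0) ∧
      xp = Matrix.toEuclideanLin D αp ∧
      ∀ β : EuclideanSpace ℝ (Fin n), (∀ i ∉ Ttil, β i = 0) →
        ‖y - Matrix.toEuclideanLin M xp‖ ≤
          ‖y - Matrix.toEuclideanLin M (Matrix.toEuclideanLin D β)‖)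
    -- `S` is a near-optimal support selection scheme with constant `C`
    (C : ℝ) (hC : 0 ≤ C) (S : EuclideanSpace ℝ (Fin d) → Finset (Fin n))
    (hScard : ∀ z, (S z).card ≤ ζ * k)
    (hSnear : ∀ z v : EuclideanSpace ℝ (Fin d),
      (∃ β : EuclideanSpace ℝ (Fin n), sparse k β ∧ v = Matrix.toEuclideanLin D β) →
        ‖z - projOnto (colSpan D (S z)) z‖ ^ 2 ≤ C * ‖v - z‖ ^ 2)
    (xt : EuclideanSpace ℝ (Fin d)) (hxt : xt = projOnto (colSpan D (S xp)) xp) :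
    ‖xt - x‖ ≤
      (1 + Real.sqrt C) / Real.sqrt (1 - δ ^ 2) *
          ‖(xp - x) - projOnto (colSpan D Ttil) (xp - x)‖ +
        (1 + Real.sqrt C) / (1 - δ) *
          (⨆ T' : {T' : Finset (Fin n) // T'.card ≤ 3 * ζ * k},
            ‖projOnto (colSpan D (T' : Finset (Fin n))) (Matrix.toEuclideanLin Mᴴ e)‖) := by
  obtain ⟨αp, hαps, hxpD, hmin⟩ := hxp
  have h1δ : 0 < 1 - δ := by linarith
  set g : EuclideanSpace ℝ (Fin d) := Matrix.toEuclideanLin Mᴴ e with hg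
  set E : ℝ := ⨆ T' : {T' : Finset (Fin n) // T'.card ≤ 3 * ζ * k},
      ‖projOnto (colSpan D (T' : Finset (Fin n))) g‖ with hEdef
  have hbdd : BddAbove (Set.range fun T' : {T' : Finset (Fin n) // T'.card ≤ 3*ζ*k} =>
      ‖projOnto (colSpan D (T' : Finset (Fin n))) g‖) := Set.Finite.bddAbove (Set.finite_range _)
  have hET : ∀ (T' : Finset (Fin n)), T'.card ≤ 3*ζ*k → ‖projOnto (colSpan D T') g‖ ≤ E :=
    fun T' h => le_ciSup hbdd ⟨T', h⟩
  have hE0 : 0 ≤ E := le_trans (norm_nonneg _) (hET Ttil hTtil)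
  have hcard1 : Ttil.card ≤ (3*ζ+1)*k :=
    le_trans hTtil (Nat.mul_le_mul (Nat.le_succ _) (le_refl k))
  have hcardT : T.card ≤ (3*ζ+1)*k :=
    le_trans hT (Nat.le_mul_of_pos_left k (by omega))
  have hcardU : (Ttil ∪ T).card ≤ (3*ζ+1)*k := by
    refine le_trans (Finset.card_union_le _ _) ?_
    calc Ttil.card + T.card ≤ 3*ζ*k + 1*k := Nat.add_le_add hTtil (by omega)
      _ = (3*ζ+1)*k := by ring
  have hαk : sparse k α := sparse_of_supported α T k hα hT
  rcases lt_or_ge δ 0 with hneg | hδ0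
  · -- degenerate case: δ < 0 forces all sparse representations to be zero
    have hzero : ∀ β : EuclideanSpace ℝ (Fin n), sparse ((3*ζ+1)*k) β →
        Matrix.toEuclideanLin D β = 0 := by
      intro β hβ
      obtain ⟨h1, h2⟩ := hrip β hβ
      have hc : (0:ℝ) ≤ 2*δ*‖Matrix.toEuclideanLin D β‖^2 := by linarith
      have hsq : ‖Matrix.toEuclideanLin D β‖^2 ≤ 0 := by nlinarith [hc, hneg]
      have h0 : ‖Matrix.toEuclideanLin D β‖^2 = 0 :=
        le_antisymm hsq (sq_nonneg _)
      exact norm_eq_zero.mp (pow_eq_zero_iff two_ne_zero |>.mp h0)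
    have hx0 : x = 0 := by
      rw [hx]; exact hzero α (sparse_of_supported α T _ hα hcardT)
    have hxp0 : xp = 0 := by
      rw [hxpD]; exact hzero αp (sparse_of_supported αp Ttil _ hαps hcard1)
    have hxt0 : xt = 0 := by rw [hxt, hxp0, map_zero]
    rw [hxt0, hx0]
    simp only [sub_zero, norm_zero]
    have t1 : 0 ≤ (1 + Real.sqrt C) / Real.sqrt (1 - δ ^ 2) *
        ‖xp - projOnto (colSpan D Ttil) xp‖ := by positivity
    have t2 : 0 ≤ (1 + Real.sqrt C) / (1 - δ) * E :=
      mul_nonneg (div_nonneg (by positivity) h1δ.le) hE0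
    linarith
  -- main case : 0 ≤ δ < 1
  set K := colSpan D Ttil with hK
  set z := xp - x with hzdef
  set u := projOnto K z with hudef
  set w := z - u with hwdef
  have huK : u ∈ K := Submodule.coe_mem _
  have hwKo : w ∈ Kᗮ := K.sub_starProjection_mem_orthogonal z
  have huw0 : ⟪u, w⟫ = 0 := (Submodule.mem_orthogonal K w).mp hwKo u huK
  have hzuw : z = u + w := by rw [hwdef]; abel
  have hzD : z = Matrix.toEuclideanLin D (αp - α) := by
    rw [hzdef, hxpD, hx, map_sub]
  obtain ⟨γ, hγs, huD⟩ := exists_of_mem_colSpan D Ttil huK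
  have hwD : w = Matrix.toEuclideanLin D (αp - α - γ) := by
    rw [hwdef, hzD, huD, ← map_sub]
  have hwsupp : ∀ i ∉ Ttil ∪ T, (αp - α - γ) i = 0 := by
    intro i hi
    rw [Finset.mem_union, not_or] at hi
    simp [PiLp.sub_apply, hαps i hi.1, hα i hi.2, hγs i hi.1]
  -- RIP bounds for u and w
  have hripu := hrip γ (sparse_of_supported γ Ttil _ hγs hcard1)
  rw [← huD] at hripu
  have hripw := hrip _ (sparse_of_supported _ _ _ hwsupp hcardU)
  rw [← hwD] at hripw
  -- the least-squares orthogonality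
  have horth : ∀ v ∈ K, ⟪y - Matrix.toEuclideanLin M xp, Matrix.toEuclideanLin M v⟫ = 0 := by
    intro v hv
    obtain ⟨β, hβs, hβD⟩ := exists_of_mem_colSpan D Ttil hv
    have quad : ∀ t : ℝ, 0 ≤ ‖Matrix.toEuclideanLin M v‖^2*(t*t) +
        (2*(-⟪y - Matrix.toEuclideanLin M xp, Matrix.toEuclideanLin M v⟫))*t + 0 := by
      intro t
      have hsupp : ∀ i ∉ Ttil, (αp + t • β) i = 0 := by
        intro i hi
        simp [PiLp.add_apply, PiLp.smul_apply, hαps i hi, hβs i hi]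
      have hm := hmin _ hsupp
      have hvec : Matrix.toEuclideanLin D (αp + t • β) = xp + t • v := by
        rw [_root_.map_add, _root_.map_smul, ← hxpD, ← hβD]
      rw [hvec] at hm
      have hsub : y - Matrix.toEuclideanLin M (xp + t • v) =
          (y - Matrix.toEuclideanLin M xp) - t • Matrix.toEuclideanLin M v := by
        rw [_root_.map_add, _root_.map_smul]; abel
      rw [hsub] at hm
      have h2 := pow_le_pow_left₀ (norm_nonneg _) hm 2
      rw [norm_sub_sq_real (y - Matrix.toEuclideanLin M xp) (t • Matrix.toEuclideanLin M v),
        real_inner_smul_right, norm_smul] at h2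
      simp only [Real.norm_eq_abs] at h2
      nlinarith [h2, sq_abs t]
    have hdisc := quadDisc' _ _ _ quad
    rw [neg_sq, mul_zero] at hdisc
    have hI2 : ⟪y - Matrix.toEuclideanLin M xp, Matrix.toEuclideanLin M v⟫^2 ≤ 0 := hdisc
    have hI0 := le_antisymm hI2 (sq_nonneg _)
    exact pow_eq_zero_iff two_ne_zero |>.mp hI0
  -- quadratic expansions from the RIP
  have expandN : ∀ t : ℝ, ‖u + t • w‖^2 = ‖u‖^2 + t^2*‖w‖^2 := by
    intro t
    rw [norm_add_sq_real, real_inner_smul_right, huw0, norm_smul]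
    simp only [Real.norm_eq_abs, mul_pow, sq_abs]
    ring
  have expandM : ∀ t : ℝ, ‖Matrix.toEuclideanLin M (u + t • w)‖^2 =
      ‖Matrix.toEuclideanLin M u‖^2 +
        2*(t*⟪Matrix.toEuclideanLin M u, Matrix.toEuclideanLin M w⟫) +
        t^2*‖Matrix.toEuclideanLin M w‖^2 := by
    intro t
    rw [_root_.map_add, _root_.map_smul, norm_add_sq_real, real_inner_smul_right, norm_smul]
    simp only [Real.norm_eq_abs, mul_pow, sq_abs]
  have hripuw : ∀ t : ℝ,
      (1-δ) * ‖u + t • w‖^2 ≤ ‖Matrix.toEuclideanLin M (u + t • w)‖^2 ∧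
      ‖Matrix.toEuclideanLin M (u + t • w)‖^2 ≤ (1+δ) * ‖u + t • w‖^2 := by
    intro t
    have hsupp : ∀ i ∉ Ttil ∪ T, (γ + t • (αp - α - γ)) i = 0 := by
      intro i hi
      have h1 := hwsupp i hi
      rw [Finset.mem_union, not_or] at hi
      simp only [PiLp.add_apply, PiLp.smul_apply, smul_eq_mul]
      rw [hγs i hi.1, h1]
      ring
    have hr := hrip _ (sparse_of_supported _ _ _ hsupp hcardU)
    have hvec : Matrix.toEuclideanLin D (γ + t • (αp - α - γ)) = u + t • w := by
      rw [_root_.map_add, _root_.map_smul, ← huD, ← hwD]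
    rw [hvec] at hr
    exact ⟨by linarith [hr.1], by linarith [hr.2]⟩
  have hd1 : ⟪Matrix.toEuclideanLin M u, Matrix.toEuclideanLin M w⟫^2 ≤
      (‖Matrix.toEuclideanLin M u‖^2-(1-δ)*‖u‖^2) *
      (‖Matrix.toEuclideanLin M w‖^2-(1-δ)*‖w‖^2) := by
    have quad : ∀ t : ℝ, 0 ≤ (‖Matrix.toEuclideanLin M w‖^2-(1-δ)*‖w‖^2)*(t*t) +
        (2*⟪Matrix.toEuclideanLin M u, Matrix.toEuclideanLin M w⟫)*t +
        (‖Matrix.toEuclideanLin M u‖^2-(1-δ)*‖u‖^2) := by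
      intro t
      have h := (hripuw t).1
      rw [expandN t, expandM t] at h
      nlinarith [h]
    have hd1' := quadDisc' _ _ _ quad
    rw [mul_comm] at hd1'
    exact hd1'
  have hd2 : ⟪Matrix.toEuclideanLin M u, Matrix.toEuclideanLin M w⟫^2 ≤
      ((1+δ)*‖u‖^2-‖Matrix.toEuclideanLin M u‖^2) *
      ((1+δ)*‖w‖^2-‖Matrix.toEuclideanLin M w‖^2) := by
    have quad : ∀ t : ℝ, 0 ≤ ((1+δ)*‖w‖^2-‖Matrix.toEuclideanLin M w‖^2)*(t*t) +
        (2*(-⟪Matrix.toEuclideanLin M u, Matrix.toEuclideanLin M w⟫))*t +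
        ((1+δ)*‖u‖^2-‖Matrix.toEuclideanLin M u‖^2) := by
      intro t
      have h := (hripuw t).2
      rw [expandN t, expandM t] at h
      nlinarith [h]
    have hd2' := quadDisc' _ _ _ quad
    rw [neg_sq, mul_comm] at hd2'
    exact hd2'
  -- the main inner-product estimate
  have hmain : ‖Matrix.toEuclideanLin M u‖^2 +
      ⟪Matrix.toEuclideanLin M u, Matrix.toEuclideanLin M w⟫ ≤ ‖u‖ * E := by
    have h1 : ‖Matrix.toEuclideanLin M u‖^2 +
        ⟪Matrix.toEuclideanLin M u, Matrix.toEuclideanLin M w⟫ =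
        ⟪Matrix.toEuclideanLin M u, Matrix.toEuclideanLin M z⟫ := by
      rw [hzuw, _root_.map_add, inner_add_right, real_inner_self_eq_norm_sq]
    have h2 : Matrix.toEuclideanLin M z = (Matrix.toEuclideanLin M xp - y) + e := by
      rw [hzdef, map_sub, hy]; abel
    have h3 : ⟪Matrix.toEuclideanLin M u, Matrix.toEuclideanLin M xp - y⟫ = 0 := by
      rw [real_inner_comm, show Matrix.toEuclideanLin M xp - y =
        -(y - Matrix.toEuclideanLin M xp) from by abel, inner_neg_left, horth u huK, neg_zero]
    have h4 : ⟪Matrix.toEuclideanLin M u, e⟫ = ⟪u, g⟫ := by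
      rw [hg, Matrix.toEuclideanLin_conjTranspose_eq_adjoint, LinearMap.adjoint_inner_right]
    have h5 : ⟪u, g⟫ = ⟪u, projOnto K g⟫ := by
      have hgo : g - projOnto K g ∈ Kᗮ := K.sub_starProjection_mem_orthogonal g
      have hz0 := (Submodule.mem_orthogonal K _).mp hgo u huK
      rw [← sub_eq_zero, show ⟪u, g⟫ - ⟪u, projOnto K g⟫ =
        ⟪u, g - projOnto K g⟫ from (inner_sub_right _ _ _).symm]
      exact hz0
    rw [h1, h2, inner_add_right, h3, zero_add, h4, h5]
    calc ⟪u, projOnto K g⟫ ≤ ‖u‖ * ‖projOnto K g‖ := real_inner_le_norm _ _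
      _ ≤ ‖u‖ * E := mul_le_mul_of_nonneg_left (hET Ttil hTtil) (norm_nonneg _)
  -- apply the key algebraic lemma
  have h1δ2 : 0 < 1 - δ^2 := auxOneSubSq δ hδ0 hδ
  set s := Real.sqrt (1 - δ^2) with hsdef
  have hs : 0 < s := Real.sqrt_pos.mpr h1δ2
  have hs2 : s^2 = 1 - δ^2 := Real.sq_sqrt h1δ2.le
  have hplemma : ‖u‖ ≤ δ/s*‖w‖ + E/(1-δ) :=
    keyAlg ‖u‖ ‖w‖ (‖Matrix.toEuclideanLin M u‖^2) (‖Matrix.toEuclideanLin M w‖^2)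
      (⟪Matrix.toEuclideanLin M u, Matrix.toEuclideanLin M w⟫) E δ s hδ0 hδ hs hs2
      (norm_nonneg u) (norm_nonneg w) hE0 hripu.1 hripu.2 hripw.1 hripw.2 hd1 hd2 hmain
  -- Pythagoras and the square-root combination
  have hpyth : ‖z‖^2 = ‖u‖^2 + ‖w‖^2 := by
    rw [hzuw, norm_add_sq_real, huw0]; ring
  have hzq : ‖z‖ ≤ ‖w‖/s + E/(1-δ) :=
    sqrtCombine ‖u‖ ‖w‖ E δ s ‖z‖ hδ0 hδ hs hs2 (norm_nonneg u) (norm_nonneg w) hE0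
      (norm_nonneg z) hplemma hpyth
  -- the near-optimal projection step
  have hxtxp : ‖xt - xp‖ ≤ Real.sqrt C * ‖z‖ := by
    have h := hSnear xp x ⟨α, hαk, hx⟩
    rw [← hxt] at h
    rw [norm_sub_rev xp xt, norm_sub_rev x xp, ← hzdef] at h
    calc ‖xt - xp‖ = Real.sqrt (‖xt - xp‖^2) := (Real.sqrt_sq (norm_nonneg _)).symm
      _ ≤ Real.sqrt (C * ‖z‖^2) := Real.sqrt_le_sqrt h
      _ = Real.sqrt C * ‖z‖ := by
          rw [Real.sqrt_mul hC, Real.sqrt_sq (norm_nonneg z)]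
  have hfin : ‖xt - x‖ ≤ (1 + Real.sqrt C) * ‖z‖ := by
    calc ‖xt - x‖ = ‖(xt - xp) + z‖ := by rw [hzdef]; congr 1; abel
      _ ≤ ‖xt - xp‖ + ‖z‖ := norm_add_le _ _
      _ ≤ Real.sqrt C * ‖z‖ + ‖z‖ := by linarith
      _ = (1 + Real.sqrt C) * ‖z‖ := by ring
  calc ‖xt - x‖ ≤ (1 + Real.sqrt C) * ‖z‖ := hfin
    _ ≤ (1 + Real.sqrt C) * (‖w‖/s + E/(1-δ)) :=
        mul_le_mul_of_nonneg_left hzq (by positivity)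
    _ = (1 + Real.sqrt C) / s * ‖w‖ + (1 + Real.sqrt C) / (1-δ) * E := by ring

end
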